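/- Let a_1,…,a_m be nonzero elements of Ω(x) and let ℓ ≥ 0 be an integer. Assume D ⊆ Ω is a finitely generated k-algebra with fraction field F such that a_1,…,a_m ∈ F(x). Then there is a basic open subset U of Hom_k(D,k̄) such that for every φ ∈ U: each a_i specializes to a well-defined nonzero element φ(a_i) of k̄(x) — i.e., writing a_i = p_i/q_i with p_i, q_i ∈ D[x], the polynomials φ(p_i), φ(q_i) ∈ k̄[x] obtained by applying φ to the coefficients are nonzero and φ(a_i) = φ(p_i)/φ(q_i) does not depend on the chosen representation — and 𝒵(a_1,…,a_m;ℓ) = 𝒵(φ(a_1),…,φ(a_m);ℓ). -/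

import Mathlib

set_option linter.unusedSectionVars false
set_option linter.unusedVariables false

set_option linter.unusedSectionVars false
set_option linter.unusedVariables false

section Base

variable {Ω : Type*} [Field Ω] [IsAlgClosed Ω] [CharZero Ω]
variable (k : Type*) [Field k] [Algebra k Ω]
variable (kbar : Type*) [Field kbar] [Algebra k kbar] [IsAlgClosure k kbar]

/-- `Γ` is (the carrier set of) a finitely generated subgroup of the additive group `(Ω,+)`
or of the multiplicative group `(Ω∖{0},·)`. -/
def IsFGAddOrMulSubgroup (Γ : Set Ω) : Prop :=
  (∃ H : AddSubgroup Ω, H.FG ∧ Γ = (H : Set Ω)) ∨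
  (∃ H : Subgroup Ωˣ, H.FG ∧ Γ = Units.val '' (H : Set Ωˣ))

/-- The `D`-subalgebra `D[Γ]` of `Ω` generated by `Γ`. -/
def algAdj (D : Subalgebra k Ω) (Γ : Set Ω) : Subalgebra k Ω :=
  Algebra.adjoin k ((D : Set Ω) ∪ Γ)

theorem le_algAdj (D : Subalgebra k Ω) (Γ : Set Ω) : D ≤ algAdj k D Γ :=
  fun _ hx => Algebra.subset_adjoin (Set.mem_union_left _ hx)

theorem subset_algAdj (D : Subalgebra k Ω) (Γ : Set Ω) :
    Γ ⊆ (algAdj k D Γ : Set Ω) :=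
  fun _ hx => Algebra.subset_adjoin (Set.mem_union_right _ hx)

/-- `ℬ(D,Γ)`: restrictions to `D` of the `k`-homomorphisms `D[Γ] → k̄` injective on `Γ`. -/
def specB (D : Subalgebra k Ω) (Γ : Set Ω) : Set (↥D →ₐ[k] kbar) :=
  { φ | ∃ ψ : ↥(algAdj k D Γ) →ₐ[k] kbar,
      (∀ (a b : Ω) (ha : a ∈ Γ) (hb : b ∈ Γ),
        ψ ⟨a, subset_algAdj k D Γ ha⟩ = ψ ⟨b, subset_algAdj k D Γ hb⟩ → a = b) ∧
      ψ.comp (Subalgebra.inclusion (le_algAdj k D Γ)) = φ }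

/-- A basic open subset of `Hom_k(D,k̄)`: a finite intersection of sets `ℬ(D,Γ)`. -/
def IsBasicOpen (D : Subalgebra k Ω) (U : Set (↥D →ₐ[k] kbar)) : Prop :=
  ∃ s : Finset (Set Ω), s.Nonempty ∧ (∀ Γ ∈ s, IsFGAddOrMulSubgroup Γ) ∧
    U = ⋂ Γ ∈ s, specB k kbar D Γ

/-- The Zariski closed subset `𝒱(I)` of `Hom_k(D,k̄)`. -/
def specV (D : Subalgebra k Ω) (I : Ideal ↥D) : Set (↥D →ₐ[k] kbar) :=
  { φ | ∀ a ∈ I, φ a = 0 }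

/-- Density in the Zariski topology on `Hom_k(D,k̄)` (whose closed sets are the `𝒱(I)`). -/
def ZariskiDense (D : Subalgebra k Ω) (U : Set (↥D →ₐ[k] kbar)) : Prop :=
  ∀ I : Ideal ↥D, U ⊆ specV k kbar D I → specV k kbar D I = Set.univ

end Base


noncomputable section Shift

open Polynomial

theorem shift_comp_injective (K : Type*) [Field K] :
    Function.Injective fun p : Polynomial K => p.comp (Polynomial.X + 1) := by
  intro p q h
  have h2 : (p - q).comp (Polynomial.X + 1) = 0 := by
    rw [Polynomial.sub_comp]
    simpa using sub_eq_zero.mpr h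
  rcases Polynomial.comp_eq_zero_iff.mp h2 with h3 | ⟨_, h4⟩
  · exact sub_eq_zero.mp h3
  · exfalso
    have hdeg : (Polynomial.X + 1 : Polynomial K).natDegree = 1 := by
      simpa using Polynomial.natDegree_X_add_C (1 : K)
    rw [h4] at hdeg
    simp at hdeg

theorem shift_injective (K : Type*) [Field K] :
    Function.Injective ((algebraMap (Polynomial K) (FractionRing (Polynomial K))).comp
      (Polynomial.eval₂RingHom (Polynomial.C : K →+* Polynomial K) (Polynomial.X + 1))) := by
  refine (IsFractionRing.injective (Polynomial K) (FractionRing (Polynomial K))).comp ?_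
  intro p q h
  exact shift_comp_injective K h

/-- The shift automorphism `σ` of `K(x)` determined by `x ↦ x + 1` (and fixing `K`). -/
def shiftHom (K : Type*) [Field K] :
    FractionRing (Polynomial K) →+* FractionRing (Polynomial K) :=
  IsFractionRing.lift (shift_injective K)

end Shift

noncomputable section ZSet

/-- `𝒵(a₁,…,a_m;ℓ)`: the group of integer tuples `d` with `∏ i, a_i^{d_i} = σ^ℓ(f)/f`
for some nonzero `f` in `K(x)`. -/
def Zset {K : Type*} [Field K] {m : ℕ} (ℓ : ℕ) (a : Fin m → FractionRing (Polynomial K)) :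
    Set (Fin m → ℤ) :=
  { d | ∃ f : FractionRing (Polynomial K), f ≠ 0 ∧
      ∏ i, a i ^ d i = (⇑(shiftHom K))^[ℓ] f / f }

/-- The embedding `D[x] → Ω(x)`. -/
def embPolyX {Ω k : Type*} [Field Ω] [Field k] [Algebra k Ω] (D : Subalgebra k Ω) :
    Polynomial ↥D →+* FractionRing (Polynomial Ω) :=
  (algebraMap (Polynomial Ω) (FractionRing (Polynomial Ω))).comp
    (Polynomial.mapRingHom (algebraMap ↥D Ω))

/-- `A ∈ Ω(x)` specializes under `φ` to the well-defined element `y ∈ k̄(x)`: writing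
`A = p/q` with `p, q ∈ D[x]`, the polynomials `φ(p), φ(q) ∈ k̄[x]` are nonzero and
`y = φ(p)/φ(q)`. -/
def SpecRat {Ω k kbar : Type*} [Field Ω] [Field k] [Algebra k Ω]
    [Field kbar] [Algebra k kbar] (D : Subalgebra k Ω) (φ : ↥D →ₐ[k] kbar)
    (A : FractionRing (Polynomial Ω)) (y : FractionRing (Polynomial kbar)) : Prop :=
  ∃ p q : Polynomial ↥D,
    p.map φ.toRingHom ≠ 0 ∧ q.map φ.toRingHom ≠ 0 ∧
    A * embPolyX D q = embPolyX D p ∧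
    y * algebraMap (Polynomial kbar) (FractionRing (Polynomial kbar)) (q.map φ.toRingHom)
      = algebraMap (Polynomial kbar) (FractionRing (Polynomial kbar)) (p.map φ.toRingHom)

end ZSet


noncomputable section MyAux
open Polynomial
open scoped Classical


variable {K : Type*} [Field K]

def Tc (c : K) (w : K[X]) : K[X] := w.comp (X + C c)

lemma Tc_mul (c : K) (u v : K[X]) : Tc c (u * v) = Tc c u * Tc c v := mul_comp u v _
lemma Tc_one (c : K) : Tc c (1 : K[X]) = 1 := one_comp
lemma Tc_C (c b : K) : Tc c (C b) = C b := C_comp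
lemma Tc_X_sub_C (c b : K) : Tc c (X - C b) = X - C (b - c) := by
  simp only [Tc, sub_comp, X_comp, C_comp, C_sub]; ring
lemma Tc_Tc (c c' : K) (w : K[X]) : Tc c (Tc c' w) = Tc (c + c') w := by
  simp only [Tc, comp_assoc]
  congr 1
  simp only [add_comp, X_comp, C_comp, C_add]; ring
lemma Tc_zero_c (w : K[X]) : Tc (0 : K) w = w := by simp [Tc]
lemma Tc_eq_zero_iff (c : K) (w : K[X]) : Tc c w = 0 ↔ w = 0 := by
  constructor
  · intro h
    have h2 := congrArg (Tc (-c)) h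
    rwa [Tc_Tc, neg_add_cancel, Tc_zero_c, Tc, zero_comp] at h2
  · rintro rfl; exact zero_comp
lemma Tc_leadingCoeff (c : K) (w : K[X]) : (Tc c w).leadingCoeff = w.leadingCoeff := by
  rcases eq_or_ne w 0 with rfl | hw
  · simp [Tc]
  · rw [Tc, leadingCoeff_comp (by simp [natDegree_X_add_C] : (X + C c).natDegree ≠ 0)]
    simp [leadingCoeff_X_add_C]
def TcHom (c : K) : K[X] →+* K[X] := eval₂RingHom (Polynomial.C : K →+* K[X]) (X + C c)
lemma TcHom_apply (c : K) (w : K[X]) : TcHom c w = Tc c w := rfl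
lemma Tc_roots [IsAlgClosed K] (c : K) {w : K[X]} (hw : w ≠ 0) :
    (Tc c w).roots = w.roots.map (· - c) := by
  conv_lhs => rw [(IsAlgClosed.splits w).eq_prod_roots]
  rw [Tc_mul, Tc_C]
  have h1 : Tc c (Multiset.map (fun a => X - C a) w.roots).prod
      = (Multiset.map (fun a => X - C (a - c)) w.roots).prod := by
    rw [← TcHom_apply, map_multiset_prod, Multiset.map_map]
    congr 2
    ext a
    simp [Function.comp, TcHom_apply, Tc_X_sub_C]
  rw [h1]
  have h2 : (Multiset.map (fun a => X - C (a - c)) w.roots)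
      = Multiset.map (fun a => X - C a) (w.roots.map (· - c)) := by
    rw [Multiset.map_map]; rfl
  rw [h2, roots_C_mul _ (leadingCoeff_ne_zero.mpr hw), roots_multiset_prod_X_sub_C]

def orbS (c : K) (w : K[X]) (γ : K) : ℕ :=
  Multiset.card (w.roots.filter (fun r => ∃ t : ℤ, r - γ = (t : K) * c))

lemma orbS_mul (c : K) {u v : K[X]} (hu : u ≠ 0) (hv : v ≠ 0) (γ : K) :
    orbS c (u * v) γ = orbS c u γ + orbS c v γ := by
  unfold orbS
  rw [roots_mul (mul_ne_zero hu hv), Multiset.filter_add, Multiset.card_add]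
lemma orbS_pow (c : K) {u : K[X]} (hu : u ≠ 0) (n : ℕ) (γ : K) :
    orbS c (u ^ n) γ = n * orbS c u γ := by
  induction n with
  | zero => simp [orbS, pow_zero, roots_one]
  | succ n ih => rw [pow_succ, orbS_mul c (pow_ne_zero n hu) hu, ih]; ring
lemma orbS_C (c b : K) (γ : K) : orbS c (C b) γ = 0 := by simp [orbS, roots_C]
lemma orbS_one (c : K) (γ : K) : orbS c (1 : K[X]) γ = 0 := by simpa using orbS_C c 1 γ
lemma orbS_shift (c : K) (w : K[X]) (γ : K) (t : ℤ) :
    orbS c w (γ + (t : K) * c) = orbS c w γ := by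
  unfold orbS
  congr 1
  apply Multiset.filter_congr
  intro r _
  constructor
  · rintro ⟨s, hs⟩; exact ⟨s + t, by push_cast; linear_combination hs⟩
  · rintro ⟨s, hs⟩; exact ⟨s - t, by push_cast; linear_combination hs⟩
lemma orbS_X_sub_C (c b γ : K) :
    orbS c (X - C b) γ = if ∃ t : ℤ, b - γ = (t : K) * c then 1 else 0 := by
  unfold orbS
  rw [roots_X_sub_C]
  by_cases h : ∃ t : ℤ, b - γ = (t : K) * c
  · simp [Multiset.filter_singleton, h]
  · simp [Multiset.filter_singleton, h]
lemma orbS_Tc [IsAlgClosed K] (c : K) {w : K[X]} (hw : w ≠ 0) (γ : K) :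
    orbS c (Tc c w) γ = orbS c w γ := by
  unfold orbS
  rw [Tc_roots c hw, Multiset.filter_map, Multiset.card_map]
  congr 1
  apply Multiset.filter_congr
  intro r _
  simp only [Function.comp]
  constructor
  · rintro ⟨t, ht⟩; exact ⟨t + 1, by push_cast; linear_combination ht⟩
  · rintro ⟨t, ht⟩; exact ⟨t - 1, by push_cast; linear_combination ht⟩

lemma key_prod (c β : K) (s : ℕ) :
    (X - C β) * Tc c (∏ j ∈ Finset.range s, (X - C (β - (j : K) * c)))
      = (X - C (β - (s : K) * c)) * (∏ j ∈ Finset.range s, (X - C (β - (j : K) * c))) := by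
  set f : ℕ → K[X] := fun j => X - C (β - (j : K) * c) with hf
  have h1 : Tc c (∏ j ∈ Finset.range s, f j) = ∏ j ∈ Finset.range s, f (j + 1) := by
    rw [← TcHom_apply, map_prod]
    refine Finset.prod_congr rfl fun j _ => ?_
    rw [TcHom_apply, hf]
    simp only []
    rw [Tc_X_sub_C]
    congr 1
    rw [show β - (j : K) * c - c = β - ((j + 1 : ℕ) : K) * c by push_cast; ring]
  have hf0 : X - C β = f 0 := by simp [hf]
  rw [h1, hf0]
  have h2 : f 0 * ∏ j ∈ Finset.range s, f (j + 1) = ∏ j ∈ Finset.range (s + 1), f j := by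
    rw [Finset.prod_range_succ', mul_comm]
  rw [h2, Finset.prod_range_succ, mul_comm]

section Construct
variable [IsAlgClosed K] [CharZero K]

lemma cast_mul_cancel {c : K} (hc : c ≠ 0) {t t' : ℤ} (h : (t : K) * c = (t' : K) * c) :
    t = t' := by
  have := mul_right_cancel₀ hc h
  exact_mod_cast this

lemma step_lemma (c : K) (hc : c ≠ 0) (n : ℕ)
    (IH : ∀ m, m < n → ∀ P Q : K[X], P ≠ 0 → Q ≠ 0 → P.natDegree + Q.natDegree ≤ m →
      P.leadingCoeff = Q.leadingCoeff → (∀ γ, orbS c P γ = orbS c Q γ) →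
      ∃ u v : K[X], u ≠ 0 ∧ v ≠ 0 ∧ P * u * Tc c v = Q * Tc c u * v)
    (P Q : K[X]) (hP : P ≠ 0) (hQ : Q ≠ 0) (hn : P.natDegree + Q.natDegree ≤ n)
    (hlc : P.leadingCoeff = Q.leadingCoeff) (hS : ∀ γ, orbS c P γ = orbS c Q γ)
    (β : K) (hβ : P.IsRoot β)
    (hmax : ∀ t : ℤ, 0 < t → ¬ (P * Q).IsRoot (β + (t : K) * c)) :
    ∃ u v : K[X], u ≠ 0 ∧ v ≠ 0 ∧ P * u * Tc c v = Q * Tc c u * v := by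
  -- orbS c P β ≥ 1
  have hSP : 0 < orbS c P β := by
    apply Multiset.card_pos_iff_exists_mem.2
    exact ⟨β, Multiset.mem_filter.2 ⟨(mem_roots hP).2 hβ, ⟨0, by simp⟩⟩⟩
  have hSQ : 0 < orbS c Q β := by rw [← hS]; exact hSP
  obtain ⟨δ, hδmem⟩ := Multiset.card_pos_iff_exists_mem.1 hSQ
  obtain ⟨hδroots, t', ht'⟩ := Multiset.mem_filter.1 hδmem
  have hδQ : Q.IsRoot δ := isRoot_of_mem_roots hδroots
  have ht'le : t' ≤ 0 := by
    by_contra hpos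
    push_neg at hpos
    refine hmax t' hpos ?_
    have : δ = β + (t' : K) * c := by linear_combination ht'
    rw [← this]
    simp [IsRoot, eval_mul, hδQ.eq_zero]
  set s : ℕ := (-t').toNat with hs
  have hsc : ((s : ℤ) : K) = -(t' : K) := by
    rw [hs, Int.toNat_of_nonneg (by omega)]
    push_cast
    ring
  have hδs : δ = β - (s : K) * c := by
    have : ((s : ℤ) : K) = (s : K) := by push_cast; ring
    rw [← this, hsc]
    linear_combination ht'
  obtain ⟨P₁, hP₁⟩ := dvd_iff_isRoot.2 hβ
  obtain ⟨Q₁, hQ₁⟩ := dvd_iff_isRoot.2 hδQ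
  have hP₁0 : P₁ ≠ 0 := by rintro rfl; simp at hP₁; exact hP hP₁
  have hQ₁0 : Q₁ ≠ 0 := by rintro rfl; simp at hQ₁; exact hQ hQ₁
  have hdegP : P.natDegree = P₁.natDegree + 1 := by
    rw [hP₁, natDegree_mul (X_sub_C_ne_zero β) hP₁0, natDegree_X_sub_C]; ring
  have hdegQ : Q.natDegree = Q₁.natDegree + 1 := by
    rw [hQ₁, natDegree_mul (X_sub_C_ne_zero δ) hQ₁0, natDegree_X_sub_C]; ring
  have hlc1 : P₁.leadingCoeff = Q₁.leadingCoeff := by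
    have h1 : P.leadingCoeff = P₁.leadingCoeff := by
      rw [hP₁, leadingCoeff_mul, (monic_X_sub_C β).leadingCoeff, one_mul]
    have h2 : Q.leadingCoeff = Q₁.leadingCoeff := by
      rw [hQ₁, leadingCoeff_mul, (monic_X_sub_C δ).leadingCoeff, one_mul]
    rw [← h1, ← h2, hlc]
  have hSsub : ∀ γ, orbS c (X - C β) γ = orbS c (X - C δ) γ := by
    intro γ
    rw [orbS_X_sub_C, orbS_X_sub_C]
    congr 1
    apply propext
    constructor
    · rintro ⟨t, ht⟩
      refine ⟨t - s, ?_⟩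
      push_cast
      rw [hδs]
      linear_combination ht
    · rintro ⟨t, ht⟩
      refine ⟨t + s, ?_⟩
      push_cast
      rw [hδs] at ht
      linear_combination ht
  have hS1 : ∀ γ, orbS c P₁ γ = orbS c Q₁ γ := by
    intro γ
    have e1 : orbS c P γ = orbS c (X - C β) γ + orbS c P₁ γ := by
      rw [hP₁] at hP ⊢; exact orbS_mul c (X_sub_C_ne_zero β) hP₁0 γ
    have e2 : orbS c Q γ = orbS c (X - C δ) γ + orbS c Q₁ γ := by
      rw [hQ₁] at hQ ⊢; exact orbS_mul c (X_sub_C_ne_zero δ) hQ₁0 γ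
    have := hS γ
    rw [e1, e2, hSsub γ] at this
    omega
  obtain ⟨u₁, v₁, hu₁, hv₁, heq₁⟩ :=
    IH (P₁.natDegree + Q₁.natDegree) (by omega) P₁ Q₁ hP₁0 hQ₁0 le_rfl hlc1 hS1
  set w : K[X] := ∏ j ∈ Finset.range s, (X - C (β - (j : K) * c)) with hw
  have hw0 : w ≠ 0 := Finset.prod_ne_zero_iff.2 fun j _ => X_sub_C_ne_zero _
  have hkey : (X - C β) * Tc c w = (X - C δ) * w := by
    rw [hw, key_prod c β s, ← hδs]
  refine ⟨u₁, v₁ * w, hu₁, mul_ne_zero hv₁ hw0, ?_⟩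
  rw [Tc_mul]
  calc P * u₁ * (Tc c v₁ * Tc c w)
      = ((X - C β) * Tc c w) * (P₁ * u₁ * Tc c v₁) := by rw [hP₁]; ring
    _ = ((X - C δ) * w) * (Q₁ * Tc c u₁ * v₁) := by rw [hkey, heq₁]
    _ = Q * Tc c u₁ * (v₁ * w) := by rw [hQ₁]; ring

end Construct

section Construct2
variable [IsAlgClosed K] [CharZero K]

lemma construct (c : K) (hc : c ≠ 0) :
    ∀ n : ℕ, ∀ P Q : K[X], P ≠ 0 → Q ≠ 0 → P.natDegree + Q.natDegree ≤ n →
      P.leadingCoeff = Q.leadingCoeff → (∀ γ, orbS c P γ = orbS c Q γ) →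
      ∃ u v : K[X], u ≠ 0 ∧ v ≠ 0 ∧ P * u * Tc c v = Q * Tc c u * v := by
  intro n
  induction n using Nat.strong_induction_on with
  | _ n IH =>
    intro P Q hP hQ hn hlc hS
    by_cases h0 : P.natDegree = 0 ∧ Q.natDegree = 0
    · have hPc : P = C P.leadingCoeff := by
        have := eq_C_of_natDegree_eq_zero h0.1
        rwa [leadingCoeff, h0.1]
      have hQc : Q = C Q.leadingCoeff := by
        have := eq_C_of_natDegree_eq_zero h0.2
        rwa [leadingCoeff, h0.2]
      refine ⟨1, 1, one_ne_zero, one_ne_zero, ?_⟩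
      rw [Tc_one, hPc, hQc, hlc]
    · have hdeg : (P * Q).natDegree ≠ 0 := by
        rw [natDegree_mul hP hQ]
        omega
      have hdeg' : (P * Q).degree ≠ 0 := by
        rw [degree_eq_natDegree (mul_ne_zero hP hQ)]
        exact_mod_cast fun h => hdeg (by exact_mod_cast h)
      obtain ⟨α, hα⟩ := IsAlgClosed.exists_root (P * Q) hdeg'
      set Tset : Set ℤ := {t : ℤ | (P * Q).IsRoot (α + (t : K) * c)} with hTset
      have hTfin : Tset.Finite := by
        apply Set.Finite.of_finite_image (f := fun t : ℤ => α + (t : K) * c)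
        · apply Set.Finite.subset (Multiset.finite_toSet (P * Q).roots)
          rintro x ⟨t, ht, rfl⟩
          exact (mem_roots (mul_ne_zero hP hQ)).2 ht
        · intro t _ t' _ h
          have : (t : K) * c = (t' : K) * c := by linear_combination h
          exact cast_mul_cancel hc this
      have hT0 : (0 : ℤ) ∈ Tset := by simpa [hTset, IsRoot] using hα
      have hTne : hTfin.toFinset.Nonempty := ⟨0, hTfin.mem_toFinset.2 hT0⟩
      set t0 : ℤ := hTfin.toFinset.max' hTne with ht0
      have ht0mem : t0 ∈ Tset := hTfin.mem_toFinset.1 (hTfin.toFinset.max'_mem hTne)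
      have ht0le : ∀ t ∈ Tset, t ≤ t0 := fun t ht =>
        hTfin.toFinset.le_max' t (hTfin.mem_toFinset.2 ht)
      set β : K := α + (t0 : K) * c with hβdef
      have hβroot : (P * Q).IsRoot β := ht0mem
      have hmax : ∀ t : ℤ, 0 < t → ¬ (P * Q).IsRoot (β + (t : K) * c) := by
        intro t htpos hroot
        have : (t0 + t) ∈ Tset := by
          show (P * Q).IsRoot (α + ((t0 + t : ℤ) : K) * c)
          have e : α + ((t0 + t : ℤ) : K) * c = β + (t : K) * c := by
            rw [hβdef]; push_cast; ring
          rwa [e]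
        have := ht0le _ this
        omega
      have hPQ : P.IsRoot β ∨ Q.IsRoot β := by
        have := hβroot
        simp only [IsRoot, eval_mul, mul_eq_zero] at this
        exact this
      rcases hPQ with hPr | hQr
      · exact step_lemma c hc n IH P Q hP hQ hn hlc hS β hPr hmax
      · obtain ⟨u, v, hu, hv, he⟩ :=
          step_lemma c hc n IH Q P hQ hP (by omega) hlc.symm (fun γ => (hS γ).symm) β hQr
            (by intro t ht; rw [mul_comm]; exact hmax t ht)
        exact ⟨v, u, hv, hu, by linear_combination -he⟩

theorem char_iff (ℓ : ℕ) (P Q : K[X]) (hP : P ≠ 0) (hQ : Q ≠ 0) :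
    (∃ u v : K[X], u ≠ 0 ∧ v ≠ 0 ∧ P * u * Tc (ℓ : K) v = Q * Tc (ℓ : K) u * v)
      ↔ P.leadingCoeff = Q.leadingCoeff ∧ ∀ γ, orbS (ℓ : K) P γ = orbS (ℓ : K) Q γ := by
  constructor
  · rintro ⟨u, v, hu, hv, he⟩
    have hTv : Tc (ℓ : K) v ≠ 0 := fun h => hv ((Tc_eq_zero_iff _ v).1 h)
    have hTu : Tc (ℓ : K) u ≠ 0 := fun h => hu ((Tc_eq_zero_iff _ u).1 h)
    constructor
    · have := congrArg Polynomial.leadingCoeff he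
      rw [leadingCoeff_mul, leadingCoeff_mul, leadingCoeff_mul, leadingCoeff_mul,
        Tc_leadingCoeff, Tc_leadingCoeff] at this
      have hu' : u.leadingCoeff ≠ 0 := leadingCoeff_ne_zero.2 hu
      have hv' : v.leadingCoeff ≠ 0 := leadingCoeff_ne_zero.2 hv
      exact mul_right_cancel₀ hu' (mul_right_cancel₀ hv' this)
    · intro γ
      have := congrArg (fun p => orbS (ℓ : K) p γ) he
      rw [orbS_mul _ (mul_ne_zero hP hu) hTv, orbS_mul _ hP hu,
        orbS_mul _ (mul_ne_zero hQ hTu) hv, orbS_mul _ hQ hTu,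
        orbS_Tc _ hv, orbS_Tc _ hu] at this
      omega
  · rintro ⟨hlc, hS⟩
    rcases Nat.eq_zero_or_pos ℓ with hl | hl
    · subst hl
      simp only [Nat.cast_zero] at hS
      have orbze : ∀ (w : K[X]) (γ : K), orbS (0 : K) w γ = Multiset.count γ w.roots := by
        intro w γ
        rw [Multiset.count_eq_card_filter_eq]
        unfold orbS
        congr 1
        apply Multiset.filter_congr
        intro x _
        constructor
        · rintro ⟨t, ht⟩
          simp only [mul_zero] at ht
          have : x = γ := by linear_combination ht
          exact this.symm
        · rintro rfl
          exact ⟨0, by simp⟩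
      have hroots : P.roots = Q.roots := by
        ext r
        rw [← orbze P r, ← orbze Q r]
        exact hS r
      have : P = Q := by
        rw [(IsAlgClosed.splits P).eq_prod_roots,
          (IsAlgClosed.splits Q).eq_prod_roots, hlc, hroots]
      exact ⟨1, 1, one_ne_zero, one_ne_zero, by rw [Tc_one, this]⟩
    · have hc : (ℓ : K) ≠ 0 := Nat.cast_ne_zero.2 (by omega)
      exact construct (ℓ : K) hc (P.natDegree + Q.natDegree) P Q hP hQ le_rfl hlc hS

end Construct2

section DLayer

lemma iter_map_div {F : Type*} [DivisionRing F] (f : F →+* F) (ℓ : ℕ) (a b : F) :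
    f^[ℓ] (a / b) = f^[ℓ] a / f^[ℓ] b := by
  induction ℓ with
  | zero => simp
  | succ n ih =>
      rw [Function.iterate_succ_apply', Function.iterate_succ_apply',
        Function.iterate_succ_apply', ih, map_div₀]

variable {K : Type*} [Field K]

lemma shiftHom_algebraMap (w : K[X]) :
    shiftHom K (algebraMap (Polynomial K) (FractionRing (Polynomial K)) w)
      = algebraMap (Polynomial K) (FractionRing (Polynomial K)) (Tc (1 : K) w) := by
  unfold shiftHom
  rw [IsFractionRing.lift_algebraMap]
  simp only [RingHom.comp_apply, coe_eval₂RingHom]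
  simp only [Tc, C_1]
  try rfl

lemma shiftHom_iter_algebraMap (ℓ : ℕ) (w : K[X]) :
    (⇑(shiftHom K))^[ℓ] (algebraMap (Polynomial K) (FractionRing (Polynomial K)) w)
      = algebraMap (Polynomial K) (FractionRing (Polynomial K)) (Tc (ℓ : K) w) := by
  induction ℓ with
  | zero => simp [Tc_zero_c]
  | succ n ih =>
      rw [Function.iterate_succ_apply', ih, shiftHom_algebraMap, Tc_Tc]
      congr 2
      push_cast
      try ring

variable {m : ℕ}

/-- Numerator polynomial of `∏ aᵢ^{dᵢ}` given representations `aᵢ = Pᵢ/Qᵢ`. -/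
def Pd (P Q : Fin m → K[X]) (d : Fin m → ℤ) : K[X] :=
  ∏ i, P i ^ (d i).toNat * Q i ^ (-d i).toNat

lemma Pd_ne_zero {P Q : Fin m → K[X]} (hP : ∀ i, P i ≠ 0) (hQ : ∀ i, Q i ≠ 0)
    (d : Fin m → ℤ) : Pd P Q d ≠ 0 :=
  Finset.prod_ne_zero_iff.2 fun i _ =>
    mul_ne_zero (pow_ne_zero _ (hP i)) (pow_ne_zero _ (hQ i))

lemma prod_zpow_eq (a : Fin m → FractionRing (Polynomial K)) (P Q : Fin m → K[X])
    (hP : ∀ i, P i ≠ 0) (hQ : ∀ i, Q i ≠ 0)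
    (hrel : ∀ i, a i * algebraMap (Polynomial K) (FractionRing (Polynomial K)) (Q i)
      = algebraMap (Polynomial K) (FractionRing (Polynomial K)) (P i))
    (d : Fin m → ℤ) :
    ∏ i, a i ^ d i
      = algebraMap (Polynomial K) (FractionRing (Polynomial K)) (Pd P Q d)
        / algebraMap (Polynomial K) (FractionRing (Polynomial K)) (Pd Q P d) := by
  set alg := algebraMap (Polynomial K) (FractionRing (Polynomial K)) with halg
  have hinj : Function.Injective ⇑alg := IsFractionRing.injective _ _
  have halgne : ∀ w : K[X], w ≠ 0 → alg w ≠ 0 := by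
    intro w hw h
    exact hw (hinj (by rw [h, map_zero]))
  have hstep : ∀ i, a i ^ d i
      = (alg (P i) ^ (d i).toNat * alg (Q i) ^ (-d i).toNat)
        / (alg (Q i) ^ (d i).toNat * alg (P i) ^ (-d i).toNat) := by
    intro i
    have hpi : alg (P i) ≠ 0 := halgne _ (hP i)
    have hqi : alg (Q i) ≠ 0 := halgne _ (hQ i)
    have hai : a i = alg (P i) / alg (Q i) := by
      rw [eq_div_iff hqi]; exact hrel i
    set n : ℕ := (d i).toNat with hn
    set mm : ℕ := (-d i).toNat with hmm
    have hd : d i = (n : ℤ) - (mm : ℤ) := by omega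
    rw [hai, hd, zpow_sub₀ (div_ne_zero hpi hqi), zpow_natCast, zpow_natCast,
      div_pow, div_pow]
    field_simp
  calc ∏ i, a i ^ d i
      = ∏ i, (alg (P i) ^ (d i).toNat * alg (Q i) ^ (-d i).toNat)
          / (alg (Q i) ^ (d i).toNat * alg (P i) ^ (-d i).toNat) :=
        Finset.prod_congr rfl fun i _ => hstep i
    _ = (∏ i, alg (P i) ^ (d i).toNat * alg (Q i) ^ (-d i).toNat)
          / ∏ i, alg (Q i) ^ (d i).toNat * alg (P i) ^ (-d i).toNat :=
        Finset.prod_div_distrib _ _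
    _ = alg (Pd P Q d) / alg (Pd Q P d) := by
        rw [Pd, Pd, map_prod, map_prod]
        congr 1 <;> exact Finset.prod_congr rfl fun i _ => by rw [map_mul, map_pow, map_pow]

theorem mem_Zset_iff_poly {m : ℕ} (ℓ : ℕ) (a : Fin m → FractionRing (Polynomial K))
    (P Q : Fin m → K[X]) (hP : ∀ i, P i ≠ 0) (hQ : ∀ i, Q i ≠ 0)
    (hrel : ∀ i, a i * algebraMap (Polynomial K) (FractionRing (Polynomial K)) (Q i)
      = algebraMap (Polynomial K) (FractionRing (Polynomial K)) (P i))
    (d : Fin m → ℤ) :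
    d ∈ Zset ℓ a ↔ ∃ u v : K[X], u ≠ 0 ∧ v ≠ 0 ∧
      Pd P Q d * u * Tc (ℓ : K) v = Pd Q P d * Tc (ℓ : K) u * v := by
  set alg := algebraMap (Polynomial K) (FractionRing (Polynomial K)) with halg
  have hinj : Function.Injective ⇑alg := IsFractionRing.injective _ _
  have halgne : ∀ w : K[X], w ≠ 0 → alg w ≠ 0 := by
    intro w hw h
    exact hw (hinj (by rw [h, map_zero]))
  have hprod := prod_zpow_eq a P Q hP hQ hrel d
  have hPd : Pd P Q d ≠ 0 := Pd_ne_zero hP hQ d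
  have hQd : Pd Q P d ≠ 0 := Pd_ne_zero hQ hP d
  constructor
  · rintro ⟨f, hf, he⟩
    obtain ⟨x, y, hy, hxy⟩ := IsFractionRing.div_surjective (A := Polynomial K) f
    have hy0 : y ≠ 0 := nonZeroDivisors.ne_zero hy
    have hx0 : x ≠ 0 := by
      rintro rfl
      rw [map_zero, zero_div] at hxy
      exact hf hxy.symm
    refine ⟨x, y, hx0, hy0, ?_⟩
    have hiter : (⇑(shiftHom K))^[ℓ] f = alg (Tc (ℓ : K) x) / alg (Tc (ℓ : K) y) := by
      rw [← hxy, iter_map_div, shiftHom_iter_algebraMap, shiftHom_iter_algebraMap]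
    rw [hprod, hiter, ← hxy] at he
    have hTx : alg (Tc (ℓ : K) x) ≠ 0 := halgne _ (fun h => hx0 ((Tc_eq_zero_iff _ x).1 h))
    have hTy : alg (Tc (ℓ : K) y) ≠ 0 := halgne _ (fun h => hy0 ((Tc_eq_zero_iff _ y).1 h))
    have hax : alg x ≠ 0 := halgne _ hx0
    have hay : alg y ≠ 0 := halgne _ hy0
    have haPd : alg (Pd P Q d) ≠ 0 := halgne _ hPd
    have haQd : alg (Pd Q P d) ≠ 0 := halgne _ hQd
    have he2 : alg (Pd P Q d) * (alg x * alg (Tc (ℓ : K) y))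
        = alg (Pd Q P d) * (alg (Tc (ℓ : K) x) * alg y) := by
      rw [← halg, div_div_div_eq, div_eq_div_iff haQd (mul_ne_zero hTy hax)] at he
      linear_combination he
    apply hinj
    rw [map_mul, map_mul, map_mul, map_mul]
    linear_combination he2
  · rintro ⟨u, v, hu, hv, he⟩
    have hau : alg u ≠ 0 := halgne _ hu
    have hav : alg v ≠ 0 := halgne _ hv
    have hTu : alg (Tc (ℓ : K) u) ≠ 0 := halgne _ (fun h => hu ((Tc_eq_zero_iff _ u).1 h))
    have hTv : alg (Tc (ℓ : K) v) ≠ 0 := halgne _ (fun h => hv ((Tc_eq_zero_iff _ v).1 h))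
    have haPd : alg (Pd P Q d) ≠ 0 := halgne _ hPd
    have haQd : alg (Pd Q P d) ≠ 0 := halgne _ hQd
    refine ⟨alg u / alg v, div_ne_zero hau hav, ?_⟩
    rw [hprod, iter_map_div, shiftHom_iter_algebraMap, shiftHom_iter_algebraMap]
    have he' : alg (Pd P Q d) * alg u * alg (Tc (ℓ : K) v)
        = alg (Pd Q P d) * alg (Tc (ℓ : K) u) * alg v := by
      rw [← map_mul, ← map_mul, ← map_mul, ← map_mul, he]
    rw [← halg, div_div_div_eq, div_eq_div_iff haQd (mul_ne_zero hTv hau)]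
    linear_combination he'

lemma orbS_finprod (c : K) {ι : Type*} (s : Finset ι) (f : ι → K[X])
    (hf : ∀ i ∈ s, f i ≠ 0) (γ : K) :
    orbS c (∏ i ∈ s, f i) γ = ∑ i ∈ s, orbS c (f i) γ := by
  classical
  induction s using Finset.cons_induction with
  | empty => simp [orbS_one]
  | cons i s his ih =>
      rw [Finset.prod_cons, Finset.sum_cons,
        orbS_mul c (hf i (Finset.mem_cons_self i s))
          (Finset.prod_ne_zero_iff.2 fun j hj => hf j (Finset.mem_cons_of_mem hj)),
        ih (fun j hj => hf j (Finset.mem_cons_of_mem hj))]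

lemma orbS_Pd (c : K) {P Q : Fin m → K[X]} (hP : ∀ i, P i ≠ 0) (hQ : ∀ i, Q i ≠ 0)
    (d : Fin m → ℤ) (γ : K) :
    orbS c (Pd P Q d) γ
      = ∑ i, ((d i).toNat * orbS c (P i) γ + (-d i).toNat * orbS c (Q i) γ) := by
  rw [Pd, orbS_finprod c _ _
    (fun i _ => mul_ne_zero (pow_ne_zero _ (hP i)) (pow_ne_zero _ (hQ i)))]
  refine Finset.sum_congr rfl fun i _ => ?_
  rw [orbS_mul c (pow_ne_zero _ (hP i)) (pow_ne_zero _ (hQ i)),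
    orbS_pow c (hP i), orbS_pow c (hQ i)]

lemma lc_Pd {P Q : Fin m → K[X]} (d : Fin m → ℤ) :
    (Pd P Q d).leadingCoeff
      = ∏ i, (P i).leadingCoeff ^ (d i).toNat * (Q i).leadingCoeff ^ (-d i).toNat := by
  rw [Pd, leadingCoeff_prod]
  exact Finset.prod_congr rfl fun i _ => by rw [leadingCoeff_mul, leadingCoeff_pow, leadingCoeff_pow]

/-- Full characterization of membership in `𝒵` over an algebraically closed field of
characteristic zero, in terms of leading coefficients and orbit sums of the chosen
representations. -/
theorem mem_Zset_char [IsAlgClosed K] [CharZero K] {m : ℕ} (ℓ : ℕ)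
    (a : Fin m → FractionRing (Polynomial K))
    (P Q : Fin m → K[X]) (hP : ∀ i, P i ≠ 0) (hQ : ∀ i, Q i ≠ 0)
    (hrel : ∀ i, a i * algebraMap (Polynomial K) (FractionRing (Polynomial K)) (Q i)
      = algebraMap (Polynomial K) (FractionRing (Polynomial K)) (P i))
    (d : Fin m → ℤ) :
    d ∈ Zset ℓ a ↔
      ((∏ i, (P i).leadingCoeff ^ (d i).toNat * (Q i).leadingCoeff ^ (-d i).toNat)
        = ∏ i, (Q i).leadingCoeff ^ (d i).toNat * (P i).leadingCoeff ^ (-d i).toNat) ∧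
      (∀ γ : K, ∑ i, ((d i).toNat * orbS (ℓ : K) (P i) γ + (-d i).toNat * orbS (ℓ : K) (Q i) γ)
        = ∑ i, ((d i).toNat * orbS (ℓ : K) (Q i) γ + (-d i).toNat * orbS (ℓ : K) (P i) γ)) := by
  rw [mem_Zset_iff_poly ℓ a P Q hP hQ hrel d,
    char_iff ℓ _ _ (Pd_ne_zero hP hQ d) (Pd_ne_zero hQ hP d), lc_Pd d, lc_Pd d]
  constructor
  · rintro ⟨h1, h2⟩
    refine ⟨h1, fun γ => ?_⟩
    have := h2 γ
    rwa [orbS_Pd _ hP hQ, orbS_Pd _ hQ hP] at this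
  · rintro ⟨h1, h2⟩
    refine ⟨h1, fun γ => ?_⟩
    rw [orbS_Pd _ hP hQ, orbS_Pd _ hQ hP]
    exact h2 γ

end DLayer

section Transport

lemma map_multiset_prod_X_sub_C {RT S : Type*} [CommRing RT] [CommRing S]
    (M : Multiset RT) (f : RT →+* S) :
    Polynomial.map f ((M.map fun a => X - C a).prod)
      = (M.map fun a => X - C (f a)).prod := by
  rw [← Polynomial.coe_mapRingHom, map_multiset_prod, Multiset.map_map]
  congr 1
  ext a
  simp [Function.comp]

/-- Transport of factorization through a specialization `ψ` of the coefficient ring. -/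
lemma transport_roots {Ω kbar RT : Type*} [Field Ω] [IsAlgClosed Ω] [Field kbar]
    [CommRing RT] (j : RT →+* Ω) (hj : Function.Injective ⇑j) (ψ : RT →+* kbar)
    (W : Polynomial RT) (hW : W.map j ≠ 0)
    (M : Multiset RT) (hM : M.map ⇑j = (W.map j).roots)
    (hψlc : ψ W.leadingCoeff ≠ 0) :
    (W.map ψ).roots = M.map ⇑ψ ∧ (W.map ψ).leadingCoeff = ψ W.leadingCoeff := by
  have hW0 : W ≠ 0 := by rintro rfl; simp at hW
  have hjlc : j W.leadingCoeff ≠ 0 := by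
    intro h
    exact leadingCoeff_ne_zero.2 hW0 (hj (by rw [h, map_zero]))
  have hlcj : (W.map j).leadingCoeff = j W.leadingCoeff :=
    leadingCoeff_map_of_leadingCoeff_ne_zero j hjlc
  have hfact : W = C W.leadingCoeff * (M.map fun a => X - C a).prod := by
    apply Polynomial.map_injective j hj
    have hrhs : Polynomial.map j (C W.leadingCoeff * (M.map fun a => X - C a).prod)
        = C (j W.leadingCoeff) * (M.map fun a => X - C (j a)).prod := by
      rw [Polynomial.map_mul, Polynomial.map_C, map_multiset_prod_X_sub_C M j]
    rw [hrhs]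
    calc W.map j = C ((W.map j).leadingCoeff) * ((W.map j).roots.map fun a => X - C a).prod :=
          (IsAlgClosed.splits _).eq_prod_roots
      _ = C (j W.leadingCoeff) * ((M.map ⇑j).map fun a => X - C a).prod := by rw [hlcj, hM]
      _ = C (j W.leadingCoeff) * (M.map fun a => X - C (j a)).prod := by
          rw [Multiset.map_map]; rfl
  have hfactk : W.map ψ = C (ψ W.leadingCoeff) * (M.map fun a => X - C (ψ a)).prod := by
    conv_lhs => rw [hfact]
    rw [Polynomial.map_mul, Polynomial.map_C, map_multiset_prod_X_sub_C M ψ]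

  constructor
  · rw [hfactk, roots_C_mul _ hψlc]
    have : (M.map fun a => X - C (ψ a)) = ((M.map ⇑ψ).map fun b => X - C b) := by
      rw [Multiset.map_map]; rfl
    rw [this, roots_multiset_prod_X_sub_C]
  · rw [hfactk, leadingCoeff_mul, leadingCoeff_C]
    have hmonic : (M.map fun a => X - C (ψ a)).prod.Monic :=
      monic_multiset_prod_of_monic _ _ fun a _ => monic_X_sub_C _
    rw [hmonic.leadingCoeff, mul_one]

end Transport

theorem Zset_specialization_aux
    {Ω : Type*} [Field Ω] [IsAlgClosed Ω] [CharZero Ω]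
    (k : Type*) [Field k] [Algebra k Ω]
    (kbar : Type*) [Field kbar] [Algebra k kbar] [IsAlgClosure k kbar]
    (D : Subalgebra k Ω) (hD : D.FG)
    {m : ℕ} (ℓ : ℕ) (a : Fin m → FractionRing (Polynomial Ω))
    (ha0 : ∀ i, a i ≠ 0)
    -- each `a_i` lies in `F(x)`, i.e. is a quotient of elements of `D[x]`
    (haF : ∀ i, ∃ p q : Polynomial ↥D, q ≠ 0 ∧ a i * embPolyX D q = embPolyX D p) :
    ∃ U : Set (↥D →ₐ[k] kbar), IsBasicOpen k kbar D U ∧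
      ∀ φ ∈ U, ∃ a' : Fin m → FractionRing (Polynomial kbar),
        (∀ i, a' i ≠ 0 ∧ SpecRat D φ (a i) (a' i)) ∧
        Zset ℓ a = Zset ℓ a' := by
  classical
  haveI hACkbar : IsAlgClosed kbar := IsAlgClosure.isAlgClosed k
  haveI hCZk : CharZero k := by
    constructor
    intro x y hxy
    have h2 : ((x : ℕ) : Ω) = ((y : ℕ) : Ω) := by
      rw [← map_natCast (algebraMap k Ω), ← map_natCast (algebraMap k Ω)]
      exact congrArg _ (by exact_mod_cast hxy)
    exact_mod_cast h2
  haveI hCZkbar : CharZero kbar :=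
    charZero_of_injective_algebraMap (algebraMap k kbar).injective
  choose p q hq0 hrel using haF
  set ιΩ : ↥D →+* Ω := algebraMap ↥D Ω with hιΩdef
  have hιinj : Function.Injective ⇑ιΩ := Subtype.coe_injective
  set PΩ : Fin m → Polynomial Ω := fun i => (p i).map ιΩ with hPΩdef
  set QΩ : Fin m → Polynomial Ω := fun i => (q i).map ιΩ with hQΩdef
  set algΩ := algebraMap (Polynomial Ω) (FractionRing (Polynomial Ω)) with halgΩ
  have hembP : ∀ w : Polynomial ↥D, embPolyX D w = algΩ (w.map ιΩ) := by
    intro w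
    simp [embPolyX, halgΩ, hιΩdef]
  have hQΩ0 : ∀ i, QΩ i ≠ 0 := by
    intro i h
    exact hq0 i (Polynomial.map_injective ιΩ hιinj (by simpa using h))
  have halgne : ∀ w : Polynomial Ω, w ≠ 0 → algΩ w ≠ 0 := by
    intro w hw h
    exact hw (IsFractionRing.injective (Polynomial Ω) (FractionRing (Polynomial Ω))
      (by rw [h, map_zero] : algΩ w = algΩ 0))
  have hrelΩ : ∀ i, a i * algΩ (QΩ i) = algΩ (PΩ i) := by
    intro i
    have := hrel i
    rwa [hembP, hembP] at this
  have hPΩ0 : ∀ i, PΩ i ≠ 0 := by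
    intro i h
    apply ha0 i
    have h2 := hrelΩ i
    rw [h, map_zero] at h2
    exact (mul_eq_zero.1 h2).resolve_right (halgne _ (hQΩ0 i))
  have hp0 : ∀ i, p i ≠ 0 := by
    intro i h
    apply hPΩ0 i
    show (p i).map ιΩ = 0
    rw [h, Polynomial.map_zero]
  have hPQ0 : ∀ i, PΩ i * QΩ i ≠ 0 := fun i => mul_ne_zero (hPΩ0 i) (hQΩ0 i)
  -- the groups
  set A : Set Ω := ⋃ i, {x | x ∈ (PΩ i * QΩ i).roots} with hA
  have hAfin : A.Finite := Set.finite_iUnion fun i => Multiset.finite_toSet _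
  set H2 : AddSubgroup Ω := AddSubgroup.closure (insert 1 A) with hH2
  set Γ2 : Set Ω := (H2 : Set Ω) with hΓ2
  have hlcPne : ∀ i, (PΩ i).leadingCoeff ≠ 0 := fun i => leadingCoeff_ne_zero.2 (hPΩ0 i)
  have hlcQne : ∀ i, (QΩ i).leadingCoeff ≠ 0 := fun i => leadingCoeff_ne_zero.2 (hQΩ0 i)
  set uP : Fin m → Ωˣ := fun i => Units.mk0 _ (hlcPne i) with huP
  set uQ : Fin m → Ωˣ := fun i => Units.mk0 _ (hlcQne i) with huQ
  set S1 : Set Ωˣ := Set.range uP ∪ Set.range uQ with hS1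
  set H1 : Subgroup Ωˣ := Subgroup.closure S1 with hH1
  set Γ1 : Set Ω := Units.val '' (H1 : Set Ωˣ) with hΓ1
  refine ⟨specB k kbar D Γ1 ∩ specB k kbar D Γ2, ?_, ?_⟩
  · refine ⟨{Γ1, Γ2}, ⟨Γ1, Finset.mem_insert_self _ _⟩, ?_, ?_⟩
    · intro Γ hΓ
      rcases Finset.mem_insert.1 hΓ with rfl | hΓ'
      · exact Or.inr ⟨H1, (Subgroup.fg_iff H1).2
          ⟨S1, rfl, (Set.finite_range _).union (Set.finite_range _)⟩, rfl⟩
      · rw [Finset.mem_singleton] at hΓ'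
        subst hΓ'
        exact Or.inl ⟨H2, (AddSubgroup.fg_iff H2).2
          ⟨insert 1 A, rfl, hAfin.insert 1⟩, rfl⟩
    · ext φ
      simp only [Set.mem_inter_iff, Set.mem_iInter, Finset.mem_insert, Finset.mem_singleton]
      constructor
      · rintro ⟨h1, h2⟩ Γ hΓ
        rcases hΓ with rfl | rfl
        · exact h1
        · exact h2
      · intro h
        exact ⟨h Γ1 (Or.inl rfl), h Γ2 (Or.inr rfl)⟩
  · rintro φ ⟨hφ1, hφ2⟩
    obtain ⟨ψ1, inj1, hres1⟩ := hφ1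
    obtain ⟨ψ2, inj2, hres2⟩ := hφ2
    set φr : ↥D →+* kbar := φ.toRingHom with hφrdef
    -- bridges
    have bridge1 : ∀ (x : ↥D) (h : (x : Ω) ∈ algAdj k D Γ1), ψ1 ⟨(x : Ω), h⟩ = φ x := by
      intro x h
      have h2 : ψ1 (Subalgebra.inclusion (le_algAdj k D Γ1) x) = φ x := DFunLike.congr_fun hres1 x
      have h3 : (Subalgebra.inclusion (le_algAdj k D Γ1) x) = ⟨(x : Ω), h⟩ := Subtype.ext rfl
      rwa [h3] at h2
    have bridge2 : ∀ (x : ↥D) (h : (x : Ω) ∈ algAdj k D Γ2), ψ2 ⟨(x : Ω), h⟩ = φ x := by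
      intro x h
      have h2 : ψ2 (Subalgebra.inclusion (le_algAdj k D Γ2) x) = φ x := DFunLike.congr_fun hres2 x
      have h3 : (Subalgebra.inclusion (le_algAdj k D Γ2) x) = ⟨(x : Ω), h⟩ := Subtype.ext rfl
      rwa [h3] at h2
    -- φ does not kill elements of D whose image is a unit in H1
    have hφ_unit_ne : ∀ (x : ↥D) (u : Ωˣ), u ∈ H1 → ((u : Ω) = (x : Ω)) → φ x ≠ 0 := by
      intro x u hu hux hx0
      have hadj : ((u : Ω) : Ω) ∈ algAdj k D Γ1 := subset_algAdj k D Γ1 ⟨u, hu, rfl⟩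
      have hadj' : (((u⁻¹ : Ωˣ) : Ω) : Ω) ∈ algAdj k D Γ1 :=
        subset_algAdj k D Γ1 ⟨u⁻¹, inv_mem hu, rfl⟩
      have hprod : ψ1 ⟨(u : Ω), hadj⟩ * ψ1 ⟨((u⁻¹ : Ωˣ) : Ω), hadj'⟩ = 1 := by
        rw [← map_mul]
        have he : (⟨(u : Ω), hadj⟩ * ⟨((u⁻¹ : Ωˣ) : Ω), hadj'⟩ : ↥(algAdj k D Γ1)) = 1 := by
          apply Subtype.ext
          show (u : Ω) * ((u⁻¹ : Ωˣ) : Ω) = 1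
          exact_mod_cast Units.mul_inv u
        rw [he, map_one]
      have hval : ψ1 ⟨(u : Ω), hadj⟩ = φ x := by
        have he : (⟨(u : Ω), hadj⟩ : ↥(algAdj k D Γ1)) = ⟨(x : Ω), hux ▸ hadj⟩ :=
          Subtype.ext hux
        rw [he]
        exact bridge1 x _
      rw [hval, hx0, zero_mul] at hprod
      exact zero_ne_one hprod
    -- leading coefficients
    have hlcmapP : ∀ i, (PΩ i).leadingCoeff = ιΩ ((p i).leadingCoeff) := by
      intro i
      apply leadingCoeff_map_of_leadingCoeff_ne_zero
      intro h
      exact leadingCoeff_ne_zero.2 (hp0 i) (hιinj (by rw [h, map_zero]))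
    have hlcmapQ : ∀ i, (QΩ i).leadingCoeff = ιΩ ((q i).leadingCoeff) := by
      intro i
      apply leadingCoeff_map_of_leadingCoeff_ne_zero
      intro h
      exact leadingCoeff_ne_zero.2 (hq0 i) (hιinj (by rw [h, map_zero]))
    have huPval : ∀ i, ((uP i : Ωˣ) : Ω) = (PΩ i).leadingCoeff := fun i => rfl
    have huQval : ∀ i, ((uQ i : Ωˣ) : Ω) = (QΩ i).leadingCoeff := fun i => rfl
    have hφlcP : ∀ i, φ ((p i).leadingCoeff) ≠ 0 := fun i =>
      hφ_unit_ne _ (uP i) (Subgroup.subset_closure (Or.inl ⟨i, rfl⟩))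
        ((huPval i).trans (hlcmapP i))
    have hφlcQ : ∀ i, φ ((q i).leadingCoeff) ≠ 0 := fun i =>
      hφ_unit_ne _ (uQ i) (Subgroup.subset_closure (Or.inr ⟨i, rfl⟩))
        ((huQval i).trans (hlcmapQ i))
    set Pk : Fin m → Polynomial kbar := fun i => (p i).map φr with hPkdef
    set Qk : Fin m → Polynomial kbar := fun i => (q i).map φr with hQkdef
    have hPk0 : ∀ i, Pk i ≠ 0 := by
      intro i h
      apply hφlcP i
      have h3 : Polynomial.map φr (p i) = 0 := h
      have h4 := congrArg (fun w => Polynomial.coeff w ((p i).natDegree)) h3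
      simp only [Polynomial.coeff_map, Polynomial.coeff_zero] at h4
      exact h4
    have hQk0 : ∀ i, Qk i ≠ 0 := by
      intro i h
      apply hφlcQ i
      have h3 : Polynomial.map φr (q i) = 0 := h
      have h4 := congrArg (fun w => Polynomial.coeff w ((q i).natDegree)) h3
      simp only [Polynomial.coeff_map, Polynomial.coeff_zero] at h4
      exact h4
    set algk := algebraMap (Polynomial kbar) (FractionRing (Polynomial kbar)) with halgk
    have halgkne : ∀ w : Polynomial kbar, w ≠ 0 → algk w ≠ 0 := by
      intro w hw h
      exact hw (IsFractionRing.injective (Polynomial kbar) (FractionRing (Polynomial kbar))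
        (by rw [h, map_zero] : algk w = algk 0))
    set a' : Fin m → FractionRing (Polynomial kbar) := fun i => algk (Pk i) / algk (Qk i)
      with ha'def
    have hrelk : ∀ i, a' i * algk (Qk i) = algk (Pk i) := fun i =>
      div_mul_cancel₀ _ (halgkne _ (hQk0 i))
    have ha'0 : ∀ i, a' i ≠ 0 := fun i =>
      div_ne_zero (halgkne _ (hPk0 i)) (halgkne _ (hQk0 i))
    -- Γ2 memberships
    have hrootΓ2 : ∀ i, ∀ r ∈ (PΩ i * QΩ i).roots, r ∈ Γ2 := by
      intro i r hr
      exact AddSubgroup.subset_closure (Set.mem_insert_of_mem _ (Set.mem_iUnion.2 ⟨i, hr⟩))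
    have h1Γ2 : (1 : Ω) ∈ H2 := AddSubgroup.subset_closure (Set.mem_insert _ _)
    have hrootPΓ2 : ∀ i, ∀ r ∈ (PΩ i).roots, r ∈ Γ2 := by
      intro i r hr
      apply hrootΓ2 i
      rw [roots_mul (hPQ0 i)]
      exact Multiset.mem_add.2 (Or.inl hr)
    have hrootQΓ2 : ∀ i, ∀ r ∈ (QΩ i).roots, r ∈ Γ2 := by
      intro i r hr
      apply hrootΓ2 i
      rw [roots_mul (hPQ0 i)]
      exact Multiset.mem_add.2 (Or.inr hr)
    have hΓ2adj : Γ2 ⊆ (algAdj k D Γ2 : Set Ω) := subset_algAdj k D Γ2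
    set ψf : Ω → kbar := fun x => if h : x ∈ algAdj k D Γ2 then ψ2 ⟨x, h⟩ else 0 with hψfdef
    have hψfval : ∀ (x : Ω) (h : x ∈ algAdj k D Γ2), ψf x = ψ2 ⟨x, h⟩ := by
      intro x h
      simp only [hψfdef, dif_pos h]
    have hψfsub : ∀ s : ↥(algAdj k D Γ2), ψf (s : Ω) = ψ2 s := by
      intro s
      rw [hψfval (s : Ω) s.2]
    have hinj2' : ∀ x y, x ∈ Γ2 → y ∈ Γ2 → ψf x = ψf y → x = y := by
      intro x y hx hy h
      apply inj2 x y hx hy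
      have e1 : ψ2 ⟨x, subset_algAdj k D Γ2 hx⟩ = ψf x := (hψfval x (hΓ2adj hx)).symm
      have e2 : ψ2 ⟨y, subset_algAdj k D Γ2 hy⟩ = ψf y := (hψfval y (hΓ2adj hy)).symm
      rw [e1, e2]
      exact h
    have hψfint : ∀ t : ℤ, ψf ((t : ℤ) : Ω) = (t : kbar) := by
      intro t
      rw [hψfval _ (intCast_mem (algAdj k D Γ2) t)]
      have he : (⟨((t : ℤ) : Ω), intCast_mem (algAdj k D Γ2) t⟩ : ↥(algAdj k D Γ2))
          = ((t : ℤ) : ↥(algAdj k D Γ2)) :=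
        Subtype.ext rfl
      rw [he, map_intCast]
    have hψfadd : ∀ (x : Ω) (t : ℤ), x ∈ algAdj k D Γ2 →
        ψf (x + ((t : ℤ) : Ω)) = ψf x + (t : kbar) := by
      intro x t hx
      have hmem : x + ((t : ℤ) : Ω) ∈ algAdj k D Γ2 := add_mem hx (intCast_mem _ t)
      rw [hψfval _ hmem, hψfval x hx]
      have he : (⟨x + ((t : ℤ) : Ω), hmem⟩ : ↥(algAdj k D Γ2))
          = ⟨x, hx⟩ + ((t : ℤ) : ↥(algAdj k D Γ2)) :=
        Subtype.ext rfl
      rw [he, map_add, map_intCast]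
    have hintΓ2 : ∀ t : ℤ, ((t : ℤ) : Ω) ∈ H2 := by
      intro t
      have := H2.zsmul_mem h1Γ2 t
      simpa using this
    have horb : ∀ x y : Ω, x ∈ Γ2 → y ∈ Γ2 →
        ((∃ t : ℤ, x - y = (t : Ω) * (ℓ : Ω)) ↔
          (∃ t : ℤ, ψf x - ψf y = (t : kbar) * (ℓ : kbar))) := by
      intro x y hx hy
      constructor
      · rintro ⟨t, ht⟩
        refine ⟨t, ?_⟩
        have hxe : x = y + ((t * (ℓ : ℤ) : ℤ) : Ω) := by push_cast; linear_combination ht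
        rw [hxe, hψfadd y (t * (ℓ : ℤ)) (hΓ2adj hy)]
        push_cast
        ring
      · rintro ⟨t, ht⟩
        refine ⟨t, ?_⟩
        have hy' : y + ((t * (ℓ : ℤ) : ℤ) : Ω) ∈ Γ2 := H2.add_mem hy (hintΓ2 _)
        have he : ψf x = ψf (y + ((t * (ℓ : ℤ) : ℤ) : Ω)) := by
          rw [hψfadd y (t * (ℓ : ℤ)) (hΓ2adj hy)]
          push_cast
          linear_combination ht
        have := hinj2' x _ hx hy' he
        rw [this]
        push_cast
        ring
    -- transported roots and leading coefficients
    set jr : ↥(algAdj k D Γ2) →+* Ω := algebraMap ↥(algAdj k D Γ2) Ω with hjrdef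
    have hjrinj : Function.Injective ⇑jr := Subtype.coe_injective
    set incl : ↥D →+* ↥(algAdj k D Γ2) := (Subalgebra.inclusion (le_algAdj k D Γ2)).toRingHom with hincldef
    have hinclinj : Function.Injective ⇑incl :=
      Subalgebra.inclusion_injective (le_algAdj k D Γ2)
    have hjrincl : ∀ w : Polynomial ↥D, (w.map incl).map jr = w.map ιΩ := by
      intro w
      rw [Polynomial.map_map]
      rfl
    have hψ2incl : ∀ w : Polynomial ↥D, (w.map incl).map ψ2.toRingHom = w.map φr := by
      intro w
      rw [Polynomial.map_map]
      congr 1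
      exact RingHom.ext fun x => DFunLike.congr_fun hres2 x
    have htransport : ∀ (w : Polynomial ↥D), w ≠ 0 →
        (∀ r ∈ (w.map ιΩ).roots, r ∈ Γ2) → φ w.leadingCoeff ≠ 0 →
        (w.map φr).roots = (w.map ιΩ).roots.map ψf ∧
          (w.map φr).leadingCoeff = φ w.leadingCoeff := by
      intro w hw hroots hlcne
      set W : Polynomial ↥(algAdj k D Γ2) := w.map incl with hWdef
      have hWj : W.map jr = w.map ιΩ := hjrincl w
      have hWj0 : W.map jr ≠ 0 := by
        rw [hWj]
        intro h
        exact hw (Polynomial.map_injective ιΩ hιinj (by simpa using h))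
      set M : Multiset ↥(algAdj k D Γ2) :=
        ((w.map ιΩ).roots).attach.map
          (fun r => (⟨r.1, hΓ2adj (hroots r.1 r.2)⟩ : ↥(algAdj k D Γ2))) with hMdef
      have hMval : M.map ⇑jr = (w.map ιΩ).roots := by
        rw [hMdef, Multiset.map_map]
        exact Multiset.attach_map_val _
      have hMval' : M.map ⇑jr = (W.map jr).roots := by rw [hMval, hWj]
      have hlcW : W.leadingCoeff = incl w.leadingCoeff := by
        apply leadingCoeff_map_of_leadingCoeff_ne_zero
        intro h
        apply hlcne
        have : w.leadingCoeff = 0 := hinclinj (by rw [h, map_zero])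
        rw [this, map_zero]
      have hψlcW : ψ2.toRingHom W.leadingCoeff ≠ 0 := by
        rw [hlcW]
        have : ψ2.toRingHom (incl w.leadingCoeff) = φ w.leadingCoeff :=
          DFunLike.congr_fun hres2 w.leadingCoeff
        rw [this]
        exact hlcne
      obtain ⟨hr, hl⟩ := transport_roots jr hjrinj ψ2.toRingHom W hWj0 M hMval' hψlcW
      rw [hψ2incl w] at hr hl
      constructor
      · have hRHS : (w.map ιΩ).roots.map ψf
            = Multiset.map (fun r => ψf r.1) ((w.map ιΩ).roots).attach := by
          conv_lhs => rw [← Multiset.attach_map_val ((w.map ιΩ).roots)]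
          rw [Multiset.map_map]
          rfl
        rw [hr, hRHS, hMdef, Multiset.map_map]
        apply Multiset.map_congr rfl
        intro s hs
        simp only [Function.comp]
        exact (hψfval s.1 _).symm
      · rw [hl, hlcW]
        exact DFunLike.congr_fun hres2 w.leadingCoeff
    have hTP : ∀ i, (Pk i).roots = (PΩ i).roots.map ψf ∧ (Pk i).leadingCoeff
        = φ ((p i).leadingCoeff) := fun i =>
      htransport (p i) (hp0 i) (hrootPΓ2 i) (hφlcP i)
    have hTQ : ∀ i, (Qk i).roots = (QΩ i).roots.map ψf ∧ (Qk i).leadingCoeff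
        = φ ((q i).leadingCoeff) := fun i =>
      htransport (q i) (hq0 i) (hrootQΓ2 i) (hφlcQ i)
    -- orbit count transfer
    have hcountGen : ∀ (W : Polynomial Ω) (Wk : Polynomial kbar),
        Wk.roots = W.roots.map ψf → (∀ r ∈ W.roots, r ∈ Γ2) → ∀ γ ∈ Γ2,
        orbS (ℓ : kbar) Wk (ψf γ) = orbS (ℓ : Ω) W γ := by
      intro W Wk hWk hWroots γ hγ
      unfold orbS
      rw [hWk, Multiset.filter_map, Multiset.card_map]
      congr 1
      apply Multiset.filter_congr
      intro r hr
      simp only [Function.comp]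
      exact (horb r γ (hWroots r hr) hγ).symm
    -- final set equality
    refine ⟨a', fun i => ⟨ha'0 i, ⟨p i, q i, hPk0 i, hQk0 i, hrel i, hrelk i⟩⟩, ?_⟩
    ext d
    rw [mem_Zset_char (K := Ω) ℓ a PΩ QΩ hPΩ0 hQΩ0 hrelΩ d,
      mem_Zset_char (K := kbar) ℓ a' Pk Qk hPk0 hQk0 hrelk d]
    -- leading coefficient condition
    set L : ↥D := ∏ i, (p i).leadingCoeff ^ (d i).toNat * (q i).leadingCoeff ^ (-d i).toNat
      with hLdef
    set R : ↥D := ∏ i, (q i).leadingCoeff ^ (d i).toNat * (p i).leadingCoeff ^ (-d i).toNat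
      with hRdef
    have hprodΩL : (∏ i, (PΩ i).leadingCoeff ^ (d i).toNat * (QΩ i).leadingCoeff ^ (-d i).toNat)
        = ιΩ L := by
      rw [hLdef, map_prod]
      refine Finset.prod_congr rfl fun i _ => ?_
      rw [map_mul, map_pow, map_pow, hlcmapP i, hlcmapQ i]
    have hprodΩR : (∏ i, (QΩ i).leadingCoeff ^ (d i).toNat * (PΩ i).leadingCoeff ^ (-d i).toNat)
        = ιΩ R := by
      rw [hRdef, map_prod]
      refine Finset.prod_congr rfl fun i _ => ?_
      rw [map_mul, map_pow, map_pow, hlcmapP i, hlcmapQ i]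
    have hprodkL : (∏ i, (Pk i).leadingCoeff ^ (d i).toNat * (Qk i).leadingCoeff ^ (-d i).toNat)
        = φ L := by
      rw [hLdef, map_prod]
      refine Finset.prod_congr rfl fun i _ => ?_
      rw [map_mul, map_pow, map_pow, (hTP i).2, (hTQ i).2]
    have hprodkR : (∏ i, (Qk i).leadingCoeff ^ (d i).toNat * (Pk i).leadingCoeff ^ (-d i).toNat)
        = φ R := by
      rw [hRdef, map_prod]
      refine Finset.prod_congr rfl fun i _ => ?_
      rw [map_mul, map_pow, map_pow, (hTP i).2, (hTQ i).2]
    have hLmem : ιΩ L ∈ Γ1 := by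
      refine ⟨∏ i, (uP i) ^ (d i).toNat * (uQ i) ^ (-d i).toNat, ?_, ?_⟩
      · refine Subgroup.prod_mem H1 fun i _ => Subgroup.mul_mem H1
          (Subgroup.pow_mem H1 (Subgroup.subset_closure (Or.inl ⟨i, rfl⟩)) _)
          (Subgroup.pow_mem H1 (Subgroup.subset_closure (Or.inr ⟨i, rfl⟩)) _)
      · rw [← hprodΩL]
        have hcoe : ((∏ i, (uP i) ^ (d i).toNat * (uQ i) ^ (-d i).toNat : Ωˣ) : Ω)
            = ∏ i, (((uP i) ^ (d i).toNat * (uQ i) ^ (-d i).toNat : Ωˣ) : Ω) :=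
          map_prod (Units.coeHom Ω) _ _
        rw [hcoe]
        refine Finset.prod_congr rfl fun i _ => ?_
        rw [Units.val_mul, Units.val_pow_eq_pow_val, Units.val_pow_eq_pow_val,
          huPval i, huQval i]
    have hRmem : ιΩ R ∈ Γ1 := by
      refine ⟨∏ i, (uQ i) ^ (d i).toNat * (uP i) ^ (-d i).toNat, ?_, ?_⟩
      · refine Subgroup.prod_mem H1 fun i _ => Subgroup.mul_mem H1
          (Subgroup.pow_mem H1 (Subgroup.subset_closure (Or.inr ⟨i, rfl⟩)) _)
          (Subgroup.pow_mem H1 (Subgroup.subset_closure (Or.inl ⟨i, rfl⟩)) _)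
      · rw [← hprodΩR]
        have hcoe : ((∏ i, (uQ i) ^ (d i).toNat * (uP i) ^ (-d i).toNat : Ωˣ) : Ω)
            = ∏ i, (((uQ i) ^ (d i).toNat * (uP i) ^ (-d i).toNat : Ωˣ) : Ω) :=
          map_prod (Units.coeHom Ω) _ _
        rw [hcoe]
        refine Finset.prod_congr rfl fun i _ => ?_
        rw [Units.val_mul, Units.val_pow_eq_pow_val, Units.val_pow_eq_pow_val,
          huPval i, huQval i]
    have hLCiff : (ιΩ L = ιΩ R) ↔ (φ L = φ R) := by
      constructor
      · intro h
        rw [hιinj h]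
      · intro h
        apply inj1 (ιΩ L) (ιΩ R) hLmem hRmem
        have e1 : ψ1 ⟨ιΩ L, subset_algAdj k D Γ1 hLmem⟩ = φ L := bridge1 L _
        have e2 : ψ1 ⟨ιΩ R, subset_algAdj k D Γ1 hRmem⟩ = φ R := bridge1 R _
        rw [e1, e2, h]
    -- orbit sum condition transfer
    have hSiff : (∀ γ : Ω, ∑ i, ((d i).toNat * orbS (ℓ : Ω) (PΩ i) γ
          + (-d i).toNat * orbS (ℓ : Ω) (QΩ i) γ)
        = ∑ i, ((d i).toNat * orbS (ℓ : Ω) (QΩ i) γ + (-d i).toNat * orbS (ℓ : Ω) (PΩ i) γ))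
        ↔ (∀ γ' : kbar, ∑ i, ((d i).toNat * orbS (ℓ : kbar) (Pk i) γ'
          + (-d i).toNat * orbS (ℓ : kbar) (Qk i) γ')
        = ∑ i, ((d i).toNat * orbS (ℓ : kbar) (Qk i) γ'
          + (-d i).toNat * orbS (ℓ : kbar) (Pk i) γ')) := by
      constructor
      · intro hup γ'
        by_cases hhit : ∃ i, ∃ x ∈ (PΩ i * QΩ i).roots,
          ∃ t : ℤ, ψf x - γ' = (t : kbar) * (ℓ : kbar)
        · obtain ⟨i0, x0, hx0, t0, ht0⟩ := hhit
          have hx0Γ2 : x0 ∈ Γ2 := hrootΓ2 i0 x0 hx0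
          have hγ'e : γ' = ψf x0 + ((-t0 : ℤ) : kbar) * (ℓ : kbar) := by
            push_cast
            linear_combination -ht0
          have hshift : ∀ w : Polynomial kbar, orbS (ℓ : kbar) w γ'
              = orbS (ℓ : kbar) w (ψf x0) := by
            intro w
            rw [hγ'e, orbS_shift]
          have hterm : ∀ i, orbS (ℓ : kbar) (Pk i) γ' = orbS (ℓ : Ω) (PΩ i) x0 := by
            intro i
            rw [hshift]
            exact hcountGen (PΩ i) (Pk i) (hTP i).1 (hrootPΓ2 i) x0 hx0Γ2
          have hterm' : ∀ i, orbS (ℓ : kbar) (Qk i) γ' = orbS (ℓ : Ω) (QΩ i) x0 := by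
            intro i
            rw [hshift]
            exact hcountGen (QΩ i) (Qk i) (hTQ i).1 (hrootQΓ2 i) x0 hx0Γ2
          calc ∑ i, ((d i).toNat * orbS (ℓ : kbar) (Pk i) γ'
                + (-d i).toNat * orbS (ℓ : kbar) (Qk i) γ')
              = ∑ i, ((d i).toNat * orbS (ℓ : Ω) (PΩ i) x0
                + (-d i).toNat * orbS (ℓ : Ω) (QΩ i) x0) := by
                refine Finset.sum_congr rfl fun i _ => ?_
                rw [hterm i, hterm' i]
            _ = ∑ i, ((d i).toNat * orbS (ℓ : Ω) (QΩ i) x0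
                + (-d i).toNat * orbS (ℓ : Ω) (PΩ i) x0) := hup x0
            _ = ∑ i, ((d i).toNat * orbS (ℓ : kbar) (Qk i) γ'
                + (-d i).toNat * orbS (ℓ : kbar) (Pk i) γ') := by
                refine Finset.sum_congr rfl fun i _ => ?_
                rw [hterm i, hterm' i]
        · have hzP : ∀ i, orbS (ℓ : kbar) (Pk i) γ' = 0 := by
            intro i
            unfold orbS
            rw [Multiset.card_eq_zero, Multiset.filter_eq_nil]
            intro el hel hpred
            rw [(hTP i).1] at hel
            obtain ⟨x, hx, rfl⟩ := Multiset.mem_map.1 hel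
            exact hhit ⟨i, x, by rw [roots_mul (hPQ0 i)]; exact Multiset.mem_add.2 (Or.inl hx),
              hpred⟩
          have hzQ : ∀ i, orbS (ℓ : kbar) (Qk i) γ' = 0 := by
            intro i
            unfold orbS
            rw [Multiset.card_eq_zero, Multiset.filter_eq_nil]
            intro el hel hpred
            rw [(hTQ i).1] at hel
            obtain ⟨x, hx, rfl⟩ := Multiset.mem_map.1 hel
            exact hhit ⟨i, x, by rw [roots_mul (hPQ0 i)]; exact Multiset.mem_add.2 (Or.inr hx),
              hpred⟩
          rw [Finset.sum_eq_zero (fun i _ => by rw [hzP i, hzQ i]; ring),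
            Finset.sum_eq_zero (fun i _ => by rw [hzP i, hzQ i]; ring)]
      · intro hdown γ
        by_cases hhit : ∃ i, ∃ x ∈ (PΩ i * QΩ i).roots,
          ∃ t : ℤ, x - γ = (t : Ω) * (ℓ : Ω)
        · obtain ⟨i0, x0, hx0, t0, ht0⟩ := hhit
          have hx0Γ2 : x0 ∈ Γ2 := hrootΓ2 i0 x0 hx0
          have hγe : γ = x0 + ((-t0 : ℤ) : Ω) * (ℓ : Ω) := by
            push_cast
            linear_combination -ht0
          have hshift : ∀ w : Polynomial Ω, orbS (ℓ : Ω) w γ = orbS (ℓ : Ω) w x0 := by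
            intro w
            rw [hγe, orbS_shift]
          have hterm : ∀ i, orbS (ℓ : Ω) (PΩ i) γ = orbS (ℓ : kbar) (Pk i) (ψf x0) := by
            intro i
            rw [hshift]
            exact (hcountGen (PΩ i) (Pk i) (hTP i).1 (hrootPΓ2 i) x0 hx0Γ2).symm
          have hterm' : ∀ i, orbS (ℓ : Ω) (QΩ i) γ = orbS (ℓ : kbar) (Qk i) (ψf x0) := by
            intro i
            rw [hshift]
            exact (hcountGen (QΩ i) (Qk i) (hTQ i).1 (hrootQΓ2 i) x0 hx0Γ2).symm
          calc ∑ i, ((d i).toNat * orbS (ℓ : Ω) (PΩ i) γ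
                + (-d i).toNat * orbS (ℓ : Ω) (QΩ i) γ)
              = ∑ i, ((d i).toNat * orbS (ℓ : kbar) (Pk i) (ψf x0)
                + (-d i).toNat * orbS (ℓ : kbar) (Qk i) (ψf x0)) := by
                refine Finset.sum_congr rfl fun i _ => ?_
                rw [hterm i, hterm' i]
            _ = ∑ i, ((d i).toNat * orbS (ℓ : kbar) (Qk i) (ψf x0)
                + (-d i).toNat * orbS (ℓ : kbar) (Pk i) (ψf x0)) := hdown (ψf x0)
            _ = ∑ i, ((d i).toNat * orbS (ℓ : Ω) (QΩ i) γ
                + (-d i).toNat * orbS (ℓ : Ω) (PΩ i) γ) := by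
                refine Finset.sum_congr rfl fun i _ => ?_
                rw [hterm i, hterm' i]
        · have hzP : ∀ i, orbS (ℓ : Ω) (PΩ i) γ = 0 := by
            intro i
            unfold orbS
            rw [Multiset.card_eq_zero, Multiset.filter_eq_nil]
            intro el hel hpred
            exact hhit ⟨i, el, by rw [roots_mul (hPQ0 i)]; exact Multiset.mem_add.2 (Or.inl hel),
              hpred⟩
          have hzQ : ∀ i, orbS (ℓ : Ω) (QΩ i) γ = 0 := by
            intro i
            unfold orbS
            rw [Multiset.card_eq_zero, Multiset.filter_eq_nil]
            intro el hel hpred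
            exact hhit ⟨i, el, by rw [roots_mul (hPQ0 i)]; exact Multiset.mem_add.2 (Or.inr hel),
              hpred⟩
          rw [Finset.sum_eq_zero (fun i _ => by rw [hzP i, hzQ i]; ring),
            Finset.sum_eq_zero (fun i _ => by rw [hzP i, hzQ i]; ring)]
    constructor
    · rintro ⟨h1, h2⟩
      constructor
      · rw [hprodkL, hprodkR]
        rw [hprodΩL, hprodΩR] at h1
        exact hLCiff.1 h1
      · exact hSiff.1 h2
    · rintro ⟨h1, h2⟩
      constructor
      · rw [hprodΩL, hprodΩR]
        apply hLCiff.2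
        rw [hprodkL, hprodkR] at h1
        exact h1
      · exact hSiff.2 h2


end MyAux

/-- Lemma 5.5 of the paper. For nonzero `a₁,…,a_m ∈ F(x) ⊆ Ω(x)` and
`ℓ ≥ 0` there is a basic open subset `U` of `Hom_k(D,k̄)` such that each `φ ∈ U` specializes
the `a_i` to well-defined nonzero `φ(a_i) ∈ k̄(x)` with
`𝒵(a₁,…,a_m;ℓ) = 𝒵(φ(a₁),…,φ(a_m);ℓ)`. -/
theorem Zset_specialization
    {Ω : Type*} [Field Ω] [IsAlgClosed Ω] [CharZero Ω]
    (k : Type*) [Field k] [Algebra k Ω]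
    (kbar : Type*) [Field kbar] [Algebra k kbar] [IsAlgClosure k kbar]
    (D : Subalgebra k Ω) (hD : D.FG)
    {m : ℕ} (ℓ : ℕ) (a : Fin m → FractionRing (Polynomial Ω))
    (ha0 : ∀ i, a i ≠ 0)
    -- each `a_i` lies in `F(x)`, i.e. is a quotient of elements of `D[x]`
    (haF : ∀ i, ∃ p q : Polynomial ↥D, q ≠ 0 ∧ a i * embPolyX D q = embPolyX D p) :
    ∃ U : Set (↥D →ₐ[k] kbar), IsBasicOpen k kbar D U ∧
      ∀ φ ∈ U, ∃ a' : Fin m → FractionRing (Polynomial kbar),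
        (∀ i, a' i ≠ 0 ∧ SpecRat D φ (a i) (a' i)) ∧
        Zset ℓ a = Zset ℓ a' :=
  Zset_specialization_aux k kbar D hD ℓ a ha0 haF
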